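/- Let q > 0 and R₀ > 0 be real numbers. Then the function z ↦ exp(iqz)·z^{−3/2} is Lebesgue integrable on [R₀,∞), the improper integral L = lim_{T→∞} ∫_{R₀}^T exp(iqz)·z^{−1/2} dz exists, and the integration-by-parts identity ∫_{R₀}^∞ exp(iqz)·z^{−3/2} dz = 2·exp(iqR₀)/√R₀ + 2iq·L holds. -/

import Mathlib

open Complex Real Filter Topology MeasureTheory intervalIntegral

theorem oscillatory_tail_integration_by_parts (q R₀ : ℝ) (hq : 0 < q) (hR₀ : 0 < R₀) :
    IntegrableOn
      (fun z : ℝ => Complex.exp (Complex.I * q * z) * ((z ^ (-(3 / 2) : ℝ) : ℝ) : ℂ))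
      (Set.Ici R₀) ∧
    ∃ L : ℂ,
      Filter.Tendsto
        (fun T : ℝ => ∫ z in R₀..T,
          Complex.exp (Complex.I * q * z) * ((z ^ (-(1 / 2) : ℝ) : ℝ) : ℂ))
        Filter.atTop (nhds L) ∧
      (∫ z in Set.Ici R₀, Complex.exp (Complex.I * q * z) * ((z ^ (-(3 / 2) : ℝ) : ℝ) : ℂ))
        = 2 * Complex.exp (Complex.I * q * R₀) / (Real.sqrt R₀ : ℂ) + 2 * Complex.I * q * L := by
  set u : ℝ → ℂ := fun z => Complex.exp (Complex.I * q * z) with hu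
  set f3 : ℝ → ℂ := fun z : ℝ => u z * ((z ^ (-(3 / 2) : ℝ) : ℝ) : ℂ) with hf3
  set f1 : ℝ → ℂ := fun z : ℝ => u z * ((z ^ (-(1 / 2) : ℝ) : ℝ) : ℂ) with hf1
  -- norm of u is 1
  have hnormu : ∀ z : ℝ, ‖u z‖ = 1 := by
    intro z
    rw [hu]
    simp only [Complex.norm_exp]
    have : (Complex.I * q * z).re = 0 := by simp
    rw [this, Real.exp_zero]
  -- continuity of u
  have hcu : Continuous u := by
    rw [hu]; fun_prop
  -- continuity of the rpow factors away from 0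
  have hcont_rpow : ∀ p : ℝ, ContinuousOn (fun z : ℝ => ((z ^ p : ℝ) : ℂ)) (Set.Ioi (0:ℝ)) := by
    intro p
    apply Continuous.comp_continuousOn Complex.continuous_ofReal
    intro z hz
    exact (Real.continuousAt_rpow_const z p (Or.inl (ne_of_gt hz))).continuousWithinAt
  -- integrability of f3 on Ioi R₀
  have hint3' : IntegrableOn f3 (Set.Ioi R₀) := by
    have hdom : IntegrableOn (fun z : ℝ => z ^ (-(3/2) : ℝ)) (Set.Ioi R₀) :=
      integrableOn_Ioi_rpow_of_lt (by norm_num) hR₀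
    refine hdom.mono' ?_ ?_
    · apply ContinuousOn.aestronglyMeasurable ?_ measurableSet_Ioi
      exact (hcu.continuousOn.mul ((hcont_rpow _).mono (fun z hz => lt_trans hR₀ hz)))
    · filter_upwards [MeasureTheory.ae_restrict_mem measurableSet_Ioi] with z hz
      rw [hf3]
      simp only [norm_mul, hnormu, one_mul, Complex.norm_real, Real.norm_eq_abs]
      rw [_root_.abs_of_nonneg (Real.rpow_nonneg (le_of_lt (lt_trans hR₀ hz)) _)]
  have hint3 : IntegrableOn f3 (Set.Ici R₀) := by
    rwa [integrableOn_Ici_iff_integrableOn_Ioi]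
  refine ⟨hint3, ?_⟩
  -- derivative of u
  have hdu : ∀ z : ℝ, HasDerivAt u (Complex.I * q * u z) z := by
    intro z
    have h1 : HasDerivAt (fun z : ℝ => ((z : ℝ) : ℂ)) 1 z := (hasDerivAt_id z).ofReal_comp
    have h2 : HasDerivAt (fun z : ℝ => Complex.I * q * (z : ℂ)) (Complex.I * q) z := by
      simpa using h1.const_mul (Complex.I * q)
    have := h2.cexp
    rw [hu]
    convert this using 1
    ring
  -- derivative of v z = -2 z^{-1/2}
  have hdv : ∀ z : ℝ, 0 < z →
      HasDerivAt (fun z : ℝ => ((-2 * z ^ (-(1/2) : ℝ) : ℝ) : ℂ)) ((z ^ (-(3/2) : ℝ) : ℝ) : ℂ) z := by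
    intro z hz
    have h1 : HasDerivAt (fun x : ℝ => x ^ (-(1/2) : ℝ)) ((-(1/2) : ℝ) * z ^ ((-(1/2) : ℝ) - 1)) z :=
      Real.hasDerivAt_rpow_const (Or.inl (ne_of_gt hz))
    have h2 := (h1.const_mul (-2 : ℝ)).ofReal_comp
    convert h2 using 2
    have : ((-(1/2) : ℝ) - 1) = (-(3/2) : ℝ) := by norm_num
    rw [this]; ring
  -- integration by parts on [R₀, T] for T ≥ R₀
  have hibp : ∀ T : ℝ, R₀ ≤ T →
      ∫ z in R₀..T, f3 z =
        u T * ((-2 * T ^ (-(1/2) : ℝ) : ℝ) : ℂ) - u R₀ * ((-2 * R₀ ^ (-(1/2) : ℝ) : ℝ) : ℂ)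
        + 2 * Complex.I * q * ∫ z in R₀..T, f1 z := by
    intro T hT
    have huIcc : Set.uIcc R₀ T ⊆ Set.Ioi (0 : ℝ) := by
      rw [Set.uIcc_of_le hT]
      intro z hz
      exact lt_of_lt_of_le hR₀ hz.1
    have key := intervalIntegral.integral_mul_deriv_eq_deriv_mul
      (u := u) (u' := fun z => Complex.I * q * u z)
      (v := fun z : ℝ => ((-2 * z ^ (-(1/2) : ℝ) : ℝ) : ℂ))
      (v' := fun z : ℝ => ((z ^ (-(3/2) : ℝ) : ℝ) : ℂ))
      (a := R₀) (b := T)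
      (fun z _ => hdu z) (fun z hz => hdv z (huIcc hz))
      ((continuous_const.mul hcu).intervalIntegrable _ _)
      (((hcont_rpow _).mono huIcc).intervalIntegrable)
    have hrw : (∫ z in R₀..T, Complex.I * q * u z * ((-2 * z ^ (-(1/2) : ℝ) : ℝ) : ℂ))
        = -2 * Complex.I * q * ∫ z in R₀..T, f1 z := by
      rw [← intervalIntegral.integral_const_mul]
      apply intervalIntegral.integral_congr
      intro z _
      rw [hf1]
      push_cast
      ring
    rw [hf3]
    simp only [key, hrw]
    ring
  -- limits
  have hb1 : Tendsto (fun T : ℝ => ∫ z in R₀..T, f3 z) atTop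
      (nhds (∫ z in Set.Ioi R₀, f3 z)) :=
    MeasureTheory.intervalIntegral_tendsto_integral_Ioi R₀ hint3' tendsto_id
  have hb2 : Tendsto (fun T : ℝ => u T * ((-2 * T ^ (-(1/2) : ℝ) : ℝ) : ℂ)) atTop (nhds 0) := by
    rw [tendsto_zero_iff_norm_tendsto_zero]
    have hbound : Tendsto (fun T : ℝ => 2 * T ^ (-(1/2) : ℝ)) atTop (nhds 0) := by
      have := (tendsto_rpow_neg_atTop (y := (1/2 : ℝ)) (by norm_num)).const_mul (2 : ℝ)
      simpa using this
    apply hbound.congr'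
    filter_upwards [eventually_gt_atTop (0 : ℝ)] with T hT
    simp only [norm_mul, hnormu, one_mul, Complex.norm_real, Real.norm_eq_abs, abs_mul]
    rw [_root_.abs_of_nonneg (Real.rpow_nonneg hT.le _)]
    norm_num
  set L : ℂ := ((∫ z in Set.Ioi R₀, f3 z) - 0 + u R₀ * ((-2 * R₀ ^ (-(1/2) : ℝ) : ℝ) : ℂ))
      / (2 * Complex.I * q) with hL
  have h2iq : (2 * Complex.I * q : ℂ) ≠ 0 := by
    simp [Complex.ext_iff, hq.ne']
  have hFlim : Tendsto (fun T : ℝ => ∫ z in R₀..T, f1 z) atTop (nhds L) := by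
    have hG : Tendsto (fun T : ℝ =>
        ((∫ z in R₀..T, f3 z) - u T * ((-2 * T ^ (-(1/2) : ℝ) : ℝ) : ℂ)
          + u R₀ * ((-2 * R₀ ^ (-(1/2) : ℝ) : ℝ) : ℂ)) / (2 * Complex.I * q)) atTop (nhds L) := by
      rw [hL]
      exact (((hb1.sub hb2).add tendsto_const_nhds).div_const _)
    apply hG.congr'
    filter_upwards [eventually_ge_atTop R₀] with T hT
    rw [div_eq_iff h2iq, hibp T hT]
    ring
  refine ⟨L, hFlim, ?_⟩
  have hIci : (∫ z in Set.Ici R₀, f3 z) = ∫ z in Set.Ioi R₀, f3 z :=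
    MeasureTheory.integral_Ici_eq_integral_Ioi
  rw [hIci]
  have hLmul : 2 * Complex.I * q * L =
      (∫ z in Set.Ioi R₀, f3 z) + u R₀ * ((-2 * R₀ ^ (-(1/2) : ℝ) : ℝ) : ℂ) := by
    rw [hL, mul_div_cancel₀ _ h2iq]; ring
  rw [hLmul]
  have hsqrt : (R₀ : ℝ) ^ (-(1/2) : ℝ) = (Real.sqrt R₀)⁻¹ := by
    rw [Real.sqrt_eq_rpow, ← Real.rpow_neg hR₀.le]
  have hsq_ne : (Real.sqrt R₀ : ℂ) ≠ 0 :=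
    Complex.ofReal_ne_zero.mpr (Real.sqrt_pos.mpr hR₀).ne'
  rw [hsqrt, hu]
  push_cast
  field_simp
  ring
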